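/- arXiv:2504.04515 — 2 statements merged into one kernel-verified Lean document; each statement's English description precedes it below -/
import Mathlib

section
/- Let λ = (λ_1,…,λ_{n+1}) ∈ ℝ^{n+1} lie in the closed positive cone Γ̄_k^+ (i.e., σ_1(λ) ≥ 0, …, σ_k(λ) ≥ 0) for 1 ≤ k ≤ n. Then ((n+1−k)/(n+1))·σ_k(λ)·σ_1(λ) − (k+1)·σ_{k+1}(λ) ≥ 0. -/
open Finset

/-- The k-th elementary symmetric polynomial of `x ∈ ℝ^m`. -/
def esym {m : ℕ} (k : ℕ) (x : Fin m → ℝ) : ℝ :=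
  ∑ s ∈ Finset.univ.powersetCard k, ∏ i ∈ s, x i

open Polynomial Filter Topology


lemma esym_zero {m : ℕ} (x : Fin m → ℝ) : esym 0 x = 1 := by
  simp [esym]

lemma esym_eq_esymm {m : ℕ} (k : ℕ) (x : Fin m → ℝ) :
    esym k x = (Finset.univ.val.map x).esymm k :=
  (Finset.esymm_map_val x Finset.univ k).symm

/-- count of j-subsets of univ containing a fixed u -/
lemma card_superset {m : ℕ} (j : ℕ) (u : Finset (Fin m)) (hu : u.card ≤ j) :
    ((Finset.univ.powersetCard j).filter (fun s => u ⊆ s)).card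
      = (m - u.card).choose (j - u.card) := by
  have hc : (Finset.univ \ u).card = m - u.card := by
    rw [Finset.card_sdiff_of_subset (Finset.subset_univ u), Finset.card_univ, Fintype.card_fin]
  rw [← hc, ← Finset.card_powersetCard (j - u.card) (Finset.univ \ u)]
  apply Finset.card_bij' (fun s _ => s \ u) (fun v _ => v ∪ u)
  · intro s hs
    simp only [Finset.mem_filter, Finset.mem_powersetCard] at hs
    obtain ⟨⟨-, hcard⟩, hsub⟩ := hs
    rw [Finset.mem_powersetCard]
    refine ⟨fun a ha => ?_, ?_⟩
    · simp only [Finset.mem_sdiff] at ha ⊢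
      exact ⟨Finset.mem_univ _, ha.2⟩
    · rw [Finset.card_sdiff_of_subset hsub, hcard]
  · intro v hv
    rw [Finset.mem_powersetCard] at hv
    obtain ⟨hsub, hcard⟩ := hv
    have hdisj : Disjoint v u := by
      refine Finset.disjoint_left.mpr fun a ha hau => ?_
      have := hsub ha
      simp only [Finset.mem_sdiff] at this
      exact this.2 hau
    simp only [Finset.mem_filter, Finset.mem_powersetCard]
    refine ⟨⟨Finset.subset_univ _, ?_⟩, Finset.subset_union_right⟩
    rw [Finset.card_union_of_disjoint hdisj, hcard]
    omega
  · intro s hs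
    simp only [Finset.mem_filter] at hs
    exact Finset.sdiff_union_of_subset hs.2
  · intro v hv
    rw [Finset.mem_powersetCard] at hv
    have hdisj : Disjoint v u := by
      refine Finset.disjoint_left.mpr fun a ha hau => ?_
      have := hv.1 ha
      simp only [Finset.mem_sdiff] at this
      exact this.2 hau
    exact Finset.union_sdiff_cancel_right hdisj

lemma esym_shift {m : ℕ} (j : ℕ) (hj : j ≤ m) (x : Fin m → ℝ) (t : ℝ) :
    esym j (fun i => x i + t)
      = ∑ i ∈ Finset.range (j+1),
          ((m - i).choose (j - i) : ℝ) * t ^ (j - i) * esym i x := by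
  classical
  have step1 : esym j (fun i => x i + t)
      = ∑ s ∈ Finset.univ.powersetCard j, ∑ u ∈ s.powerset,
          (∏ i ∈ u, x i) * t ^ (j - u.card) := by
    unfold esym
    refine Finset.sum_congr rfl fun s hs => ?_
    rw [Finset.mem_powersetCard] at hs
    rw [Finset.prod_add]
    refine Finset.sum_congr rfl fun u hu => ?_
    rw [Finset.mem_powerset] at hu
    rw [Finset.prod_const, Finset.card_sdiff_of_subset hu, hs.2]
  have step2 : ∑ s ∈ Finset.univ.powersetCard j, ∑ u ∈ s.powerset,
          (∏ i ∈ u, x i) * t ^ (j - u.card)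
      = ∑ u ∈ (Finset.univ : Finset (Fin m)).powerset,
          ∑ _s ∈ (Finset.univ.powersetCard j).filter (fun s => u ⊆ s),
            (∏ i ∈ u, x i) * t ^ (j - u.card) := by
    apply Finset.sum_comm'
    intro s u
    simp only [Finset.mem_powerset, Finset.mem_filter]
    constructor
    · rintro ⟨hs, hu⟩; exact ⟨⟨hs, hu⟩, Finset.subset_univ _⟩
    · rintro ⟨⟨hs, hu⟩, -⟩; exact ⟨hs, hu⟩
  have step3 : ∀ u : Finset (Fin m),
      ∑ _s ∈ (Finset.univ.powersetCard j).filter (fun s => u ⊆ s),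
            (∏ i ∈ u, x i) * t ^ (j - u.card)
      = (((Finset.univ.powersetCard j).filter (fun s => u ⊆ s)).card : ℝ)
          * ((∏ i ∈ u, x i) * t ^ (j - u.card)) := by
    intro u; rw [Finset.sum_const, nsmul_eq_mul]
  rw [step1, step2]
  simp only [step3]
  rw [Finset.powerset_card_disjiUnion]
  erw [Finset.sum_disjiUnion]
  rw [Finset.card_univ, Fintype.card_fin]
  rw [← Finset.sum_subset (Finset.range_subset_range.mpr (by omega : j + 1 ≤ m + 1))]
  · refine Finset.sum_congr rfl fun i hi => ?_
    rw [Finset.mem_range] at hi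
    have hij : i ≤ j := by omega
    rw [esym, Finset.mul_sum]
    refine Finset.sum_congr rfl fun u hu => ?_
    rw [Finset.mem_powersetCard] at hu
    rw [card_superset j u (by rw [hu.2]; exact hij), hu.2]
    ring
  · intro i hi hni
    rw [Finset.mem_range] at hi
    have hij : j < i := by simp only [Finset.mem_range] at hni; omega
    apply Finset.sum_eq_zero
    intro u hu
    rw [Finset.mem_powersetCard] at hu
    have : (Finset.univ.powersetCard j).filter (fun s => u ⊆ s) = ∅ := by
      apply Finset.filter_false_of_mem
      intro s hs hsub
      rw [Finset.mem_powersetCard] at hs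
      have := Finset.card_le_card hsub
      omega
    rw [this]
    simp

lemma splits_derivative (p : ℝ[X]) (hp : p.Splits) :
    (derivative p).Splits := by
  by_cases h0 : p.natDegree = 0
  · rw [Polynomial.derivative_of_natDegree_zero h0]
    exact Polynomial.Splits.zero
  · rw [Polynomial.splits_iff_card_roots]
    have h1 : Multiset.card p.roots = p.natDegree :=
      (Polynomial.splits_iff_card_roots).mp hp
    have h2 := Polynomial.card_roots_le_derivative p
    have h3 : (derivative p).roots.card ≤ (derivative p).natDegree := by
      by_cases hd : derivative p = 0
      · simp [hd]
      · exact Polynomial.card_roots' _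
    have h4 : (derivative p).natDegree ≤ p.natDegree - 1 :=
      Polynomial.natDegree_derivative_le p
    omega

lemma splits_iterate_derivative (r : ℕ) (p : ℝ[X]) (hp : p.Splits) :
    (derivative^[r] p).Splits := by
  induction r with
  | zero => exact hp
  | succ r ih => rw [Function.iterate_succ_apply']; exact splits_derivative _ ih

lemma splits_reverse (p : ℝ[X]) (hp : p.Splits) :
    p.reverse.Splits := by
  by_cases h0 : p = 0
  · simp [h0, Polynomial.Splits.zero]
  have hfac := hp.eq_prod_roots
  rw [hfac, Polynomial.reverse_mul_of_domain]
  apply Polynomial.Splits.mul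
  · rw [Polynomial.reverse_C]
    exact Polynomial.Splits.C _
  · generalize p.roots = M
    induction M using Multiset.induction_on with
    | empty =>
        have : (reverse (1:ℝ[X])) = 1 := by
          have : (1:ℝ[X]) = C 1 := by simp
          rw [this, Polynomial.reverse_C]
        simp only [Multiset.map_zero, Multiset.prod_zero, this]
        exact Polynomial.Splits.one
    | cons a s ih =>
        rw [Multiset.map_cons, Multiset.prod_cons, Polynomial.reverse_mul_of_domain]
        apply Polynomial.Splits.mul
        · apply Polynomial.Splits.of_natDegree_le_one
          exact le_trans (Polynomial.reverse_natDegree_le _) (Polynomial.natDegree_X_sub_C_le _)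
        · exact ih

lemma desc_cast_pos (n k : ℕ) (h : k ≤ n) : (0:ℝ) < (n.descFactorial k : ℕ) := by
  have : n.descFactorial k ≠ 0 := by
    rw [Ne, Nat.descFactorial_eq_zero_iff_lt]; omega
  exact_mod_cast Nat.pos_of_ne_zero this

lemma coeff_prod_esym {m : ℕ} (μ : Fin m → ℝ) (r : ℕ) (hr : r ≤ m) :
    (∏ i : Fin m, (X - C (μ i))).coeff (m - r) = (-1 : ℝ)^r * esym r μ := by
  have h1 : (∏ i : Fin m, (X - C (μ i)))
      = ((Finset.univ.val.map μ).map (fun t => X - C t)).prod := by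
    rw [Finset.prod_eq_multiset_prod, Multiset.map_map]
    rfl
  have hcard : Multiset.card (Finset.univ.val.map μ) = m := by simp
  rw [h1, Multiset.prod_X_sub_C_coeff _ (by rw [hcard]; omega : m - r ≤ Multiset.card (Finset.univ.val.map μ))]
  rw [hcard]
  have h2 : m - (m - r) = r := by omega
  rw [h2, esym_eq_esymm]

lemma desc1 (a : ℕ) : (a+1).descFactorial a = (a+1) * a.descFactorial a := by
  induction a with
  | zero => simp
  | succ a ih => rw [Nat.succ_descFactorial_succ, ih, Nat.succ_descFactorial_succ]

lemma desc2 (a : ℕ) : 2 * ((a+2).descFactorial a) = (a+2) * (a+1) * a.descFactorial a := by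
  induction a with
  | zero => simp
  | succ a ih =>
      have h1 : (a+1+2) = (a+2)+1 := by ring
      rw [h1, Nat.succ_descFactorial_succ]
      have h2 : 2 * ((a + 2 + 1) * Nat.descFactorial (a + 2) a) = (a+2+1) * (2 * ((a+2).descFactorial a)) := by ring
      rw [h2, ih, Nat.succ_descFactorial_succ]
      ring

set_option maxHeartbeats 1000000 in

set_option maxHeartbeats 1000000 in
lemma gen_newton (m a b : ℕ) (hm : m = a + b + 2) (μ : Fin m → ℝ)
    (hne : esym (a+2) μ ≠ 0) :
    ((a:ℝ)+2) * ((b:ℝ)+2) * esym a μ * esym (a+2) μ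
      ≤ ((a:ℝ)+1) * ((b:ℝ)+1) * esym (a+1) μ ^ 2 := by
  subst hm
  set E0 := esym a μ with hE0
  set E1 := esym (a+1) μ with hE1
  set E2 := esym (a+2) μ with hE2
  set A0 : ℝ := ((a.descFactorial a : ℕ) : ℝ) with hA0
  set D0 : ℝ := ((b.descFactorial b : ℕ) : ℝ) with hD0
  have hA0pos : 0 < A0 := desc_cast_pos a a le_rfl
  have hD0pos : 0 < D0 := desc_cast_pos b b le_rfl
  set f : ℝ[X] := ∏ i : Fin (a + b + 2), (X - C (μ i)) with hf
  have hfsplits : f.Splits := Splits.prod (fun i _ => Splits.X_sub_C _)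
  have hfdeg : f.natDegree = a + b + 2 := by
    rw [hf, natDegree_prod _ _ (fun i _ => X_sub_C_ne_zero (μ i))]
    simp
  have hfm : f.Monic := monic_prod_of_monic _ _ (fun i _ => monic_X_sub_C _)
  have fc0 : f.coeff b = (-1:ℝ)^(a+2) * E2 := by
    have h := coeff_prod_esym μ (a+2) (by omega)
    have h2 : a + b + 2 - (a+2) = b := by omega
    rw [h2] at h; rw [← hf] at h; rw [h, hE2]
  have fc1 : f.coeff (b+1) = (-1:ℝ)^(a+1) * E1 := by
    have h := coeff_prod_esym μ (a+1) (by omega)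
    have h2 : a + b + 2 - (a+1) = b+1 := by omega
    rw [h2] at h; rw [← hf] at h; rw [h, hE1]
  have fc2 : f.coeff (b+2) = (-1:ℝ)^a * E0 := by
    have h := coeff_prod_esym μ a (by omega)
    have h2 : a + b + 2 - a = b+2 := by omega
    rw [h2] at h; rw [← hf] at h; rw [h, hE0]
  set g : ℝ[X] := derivative^[b] f with hgdef
  have hgsplits : g.Splits := splits_iterate_derivative b f hfsplits
  have hgcoeff : ∀ i, g.coeff i = ((i+b).descFactorial b : ℕ) * f.coeff (i+b) := by
    intro i
    rw [hgdef, Polynomial.coeff_iterate_derivative, nsmul_eq_mul]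
  have hgdeg : g.natDegree = a + 2 := by
    apply le_antisymm
    · have h := Polynomial.natDegree_iterate_derivative f b
      rw [← hgdef, hfdeg] at h
      omega
    · apply Polynomial.le_natDegree_of_ne_zero
      rw [hgcoeff]
      have h1 : a + 2 + b = a + b + 2 := by omega
      rw [h1]
      have h2 : f.coeff (a + b + 2) = 1 := by
        have := hfm.coeff_natDegree
        rwa [hfdeg] at this
      rw [h2, mul_one]
      exact (desc_cast_pos (a + b + 2) b (by omega)).ne'
  set r : ℝ[X] := g.reverse with hrdef
  have hrsplits : r.Splits := splits_reverse g hgsplits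
  have hrc : ∀ i ≤ a + 2, r.coeff i = g.coeff (a + 2 - i) := by
    intro i hi
    rw [hrdef, Polynomial.coeff_reverse, hgdeg, Polynomial.revAt_le hi]
  have hrhigh : ∀ i, a + 2 < i → r.coeff i = 0 := by
    intro i hi
    rw [hrdef, Polynomial.coeff_reverse, hgdeg, Polynomial.revAt_eq_self_of_lt hi]
    exact Polynomial.coeff_eq_zero_of_natDegree_lt (by omega)
  set q : ℝ[X] := derivative^[a] r with hqdef
  have hqsplits : q.Splits := splits_iterate_derivative a r hrsplits
  have hqcoeff : ∀ i, q.coeff i = ((i+a).descFactorial a : ℕ) * r.coeff (i+a) := by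
    intro i
    rw [hqdef, Polynomial.coeff_iterate_derivative, nsmul_eq_mul]
  -- the three low coefficients of q
  have hdb : (2 * ((b+2).descFactorial b) : ℝ) = ((b:ℝ)+2)*((b:ℝ)+1)*D0 := by
    rw [hD0]; exact_mod_cast congrArg (Nat.cast : ℕ → ℝ) (desc2 b)
  have hda : (2 * ((a+2).descFactorial a) : ℝ) = ((a:ℝ)+2)*((a:ℝ)+1)*A0 := by
    rw [hA0]; exact_mod_cast congrArg (Nat.cast : ℕ → ℝ) (desc2 a)
  have hdb1 : (((b+1).descFactorial b : ℕ) : ℝ) = ((b:ℝ)+1)*D0 := by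
    rw [hD0]; exact_mod_cast congrArg (Nat.cast : ℕ → ℝ) (desc1 b)
  have hda1 : (((a+1).descFactorial a : ℕ) : ℝ) = ((a:ℝ)+1)*A0 := by
    rw [hA0]; exact_mod_cast congrArg (Nat.cast : ℕ → ℝ) (desc1 a)
  have e0 : 2 * q.coeff 0 = ((b:ℝ)+2)*((b:ℝ)+1)*D0*A0*((-1:ℝ)^a * E0) := by
    rw [hqcoeff 0]
    have h1 : 0 + a = a := by omega
    rw [h1, hrc a (by omega)]
    have h2 : a + 2 - a = 2 := by omega
    rw [h2, hgcoeff 2]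
    have h3 : 2 + b = b + 2 := by omega
    rw [h3, fc2, ← hA0]
    linear_combination (A0 * ((-1:ℝ)^a) * E0) * hdb
  have e1 : q.coeff 1 = ((a:ℝ)+1)*A0*(((b:ℝ)+1)*D0)*((-1:ℝ)^(a+1) * E1) := by
    rw [hqcoeff 1]
    have h1 : 1 + a = a + 1 := by omega
    rw [h1, hrc (a+1) (by omega)]
    have h2 : a + 2 - (a+1) = 1 := by omega
    rw [h2, hgcoeff 1]
    have h3 : 1 + b = b + 1 := by omega
    rw [h3, fc1, hda1, hdb1]
    ring
  have e2 : 2 * q.coeff 2 = ((a:ℝ)+2)*((a:ℝ)+1)*A0*D0*((-1:ℝ)^(a+2) * E2) := by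
    rw [hqcoeff 2]
    have h1 : 2 + a = a + 2 := by omega
    rw [h1, hrc (a+2) (by omega)]
    have h2 : a + 2 - (a+2) = 0 := by omega
    rw [h2, hgcoeff 0]
    have h3 : 0 + b = b := by omega
    rw [h3, fc0, ← hD0]
    linear_combination (D0 * ((-1:ℝ)^(a+2)) * E2) * hda
  have hsign1 : ((-1:ℝ)^(a+1))^2 = 1 := by
    rw [← pow_mul, mul_comm, pow_mul, neg_one_sq, one_pow]
  have hsign2 : (-1:ℝ)^(a+2) * (-1:ℝ)^a = 1 := by
    rw [← pow_add]
    have : a + 2 + a = 2 * (a+1) := by omega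
    rw [this, pow_mul, neg_one_sq, one_pow]
  -- q.coeff 2 ≠ 0
  have hq2ne : q.coeff 2 ≠ 0 := by
    intro hzero
    rw [hzero, mul_zero] at e2
    have hfacpos : (0:ℝ) < ((a:ℝ)+2)*((a:ℝ)+1)*A0*D0 := by positivity
    have hs : ((-1:ℝ)^(a+2)) ≠ 0 := pow_ne_zero _ (by norm_num)
    have h5 : ((-1:ℝ)^(a+2) * E2) = 0 := by
      rcases mul_eq_zero.mp e2.symm with h | h
      · exact absurd h hfacpos.ne'
      · exact h
    rcases mul_eq_zero.mp h5 with h | h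
    · exact hs h
    · exact hne h
  -- q is the quadratic
  have hqquad : q = C (q.coeff 2) * X^2 + C (q.coeff 1) * X + C (q.coeff 0) := by
    ext i
    match i with
    | 0 => simp
    | 1 => simp
    | 2 => simp
    | (i+3) =>
      rw [hqcoeff (i+3)]
      rw [hrhigh (i+3+a) (by omega), mul_zero]
      simp [Polynomial.coeff_X_pow]
  have hqdeg : q.natDegree = 2 := by
    rw [hqquad]; exact Polynomial.natDegree_quadratic hq2ne
  have hqne : q ≠ 0 := fun hq => hq2ne (by rw [hq]; simp)
  -- q has a real root
  have hroot : ∃ z : ℝ, q.coeff 2 * z^2 + q.coeff 1 * z + q.coeff 0 = 0 := by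
    have hcard : Multiset.card q.roots = 2 := by
      rw [Polynomial.splits_iff_card_roots.mp hqsplits, hqdeg]
    have hnonempty : q.roots ≠ 0 := by
      intro h0; rw [h0] at hcard; simp at hcard
    obtain ⟨z, hz⟩ := Multiset.exists_mem_of_ne_zero hnonempty
    refine ⟨z, ?_⟩
    have hzr : q.IsRoot z := (Polynomial.mem_roots hqne).mp hz
    have heval := hzr
    rw [Polynomial.IsRoot, hqquad] at heval
    simpa using heval
  obtain ⟨z, hz⟩ := hroot
  have hdisc : 0 ≤ (q.coeff 1)^2 - 4*(q.coeff 2)*(q.coeff 0) := by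
    have hz' : q.coeff 2 * (z*z) + q.coeff 1 * z + q.coeff 0 = 0 := by linear_combination hz
    have := (quadratic_eq_zero_iff_discrim_eq_sq hq2ne z).mp hz'
    rw [discrim] at this
    linarith [sq_nonneg (2 * q.coeff 2 * z + q.coeff 1)]
  -- assemble
  have e1sq : (q.coeff 1)^2 = (((a:ℝ)+1)*A0*((b:ℝ)+1)*D0)^2 * E1^2 := by
    rw [e1]
    linear_combination ((((a:ℝ)+1)*A0*((b:ℝ)+1)*D0)^2 * E1^2) * hsign1
  have eprod : (2*q.coeff 2)*(2*q.coeff 0)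
      = ((a:ℝ)+2)*((a:ℝ)+1)*((b:ℝ)+2)*((b:ℝ)+1)*A0^2*D0^2*E0*E2 := by
    rw [e2, e0]
    linear_combination (((a:ℝ)+2)*((a:ℝ)+1)*((b:ℝ)+2)*((b:ℝ)+1)*A0^2*D0^2*E0*E2) * hsign2
  have hdisc4 : 0 ≤ (q.coeff 1)^2 - (2*q.coeff 2)*(2*q.coeff 0) := by linarith [hdisc]
  rw [e1sq, eprod] at hdisc4
  have hc : (0:ℝ) < ((a:ℝ)+1)*((b:ℝ)+1)*A0^2*D0^2 := by positivity
  have h6 : 0 ≤ (((a:ℝ)+1)*((b:ℝ)+1)*A0^2*D0^2) *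
      (((a:ℝ)+1)*((b:ℝ)+1)*E1^2 - ((a:ℝ)+2)*((b:ℝ)+2)*E0*E2) := by linarith [hdisc4]
  have h7 := (mul_nonneg_iff_of_pos_left hc).mp h6
  linarith [h7]

lemma chain (m k : ℕ) (hk : 1 ≤ k) (hkm : k + 1 ≤ m) (μ : Fin m → ℝ)
    (hpos : ∀ j, 1 ≤ j → j ≤ k → 0 < esym j μ) :
    (m:ℝ) * ((k:ℝ)+1) * esym (k+1) μ ≤ ((m:ℝ) - (k:ℝ)) * esym 1 μ * esym k μ := by
  have main : ∀ j, 1 ≤ j → j ≤ k →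
      (m:ℝ) * (m.choose j : ℝ) * esym (j+1) μ
        ≤ (m.choose (j+1) : ℝ) * esym 1 μ * esym j μ := by
    intro j
    induction j with
    | zero => intro h; omega
    | succ j ih =>
      intro _ hjk
      have hE1 : 0 < esym 1 μ := hpos 1 le_rfl hk
      have hEj1 : 0 < esym (j+1) μ := hpos (j+1) (by omega) hjk
      rcases le_or_gt (esym (j+2) μ) 0 with hle | hgt
      · -- trivial case : esym (j+2) ≤ 0
        have h1 : (0:ℝ) ≤ (m:ℝ) * (m.choose (j+1) : ℝ) := by positivity
        have h2 : (m:ℝ) * (m.choose (j+1) : ℝ) * esym (j+1+1) μ ≤ 0 := by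
          have : j + 1 + 1 = j + 2 := by omega
          rw [this]
          exact mul_nonpos_of_nonneg_of_nonpos h1 hle
        have h3 : (0:ℝ) ≤ (m.choose (j+1+1) : ℝ) * esym 1 μ * esym (j+1) μ := by
          apply mul_nonneg (mul_nonneg (by positivity) hE1.le) hEj1.le
        linarith
      · -- Newton case
        have hj2m : j + 2 ≤ m := by omega
        have hgn := gen_newton m j (m - j - 2) (by omega) μ hgt.ne'
        have hcast : ((m - j - 2 : ℕ) : ℝ) = (m:ℝ) - (j:ℝ) - 2 := by
          have : m - j - 2 = m - (j + 2) := by omega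
          rw [this, Nat.cast_sub hj2m]
          push_cast; ring
        rw [hcast] at hgn
        have hgn' : ((j:ℝ)+2)*((m:ℝ)-(j:ℝ))*esym j μ*esym (j+2) μ
            ≤ ((j:ℝ)+1)*((m:ℝ)-(j:ℝ)-1)*esym (j+1) μ ^ 2 := by linarith [hgn]
        by_cases hj0 : j = 0
        · -- base case : j = 0, goal about esym 2
          subst hj0
          have hC1 : ((m.choose 1 : ℕ) : ℝ) = (m:ℝ) := by
            rw [Nat.choose_one_right]
          have hid2 : ((m.choose 2 : ℕ) : ℝ) * 2 = ((m.choose 1 : ℕ) : ℝ) * ((m:ℝ) - 1) := by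
            have h := Nat.choose_succ_right_eq m 1
            have hc := congrArg (Nat.cast : ℕ → ℝ) h
            push_cast [Nat.cast_sub (by omega : 1 ≤ m)] at hc
            linarith [hc]
          have hgn0 : 2*(m:ℝ)*esym 2 μ ≤ ((m:ℝ)-1)*esym 1 μ ^ 2 := by
            have h0 : esym 0 μ = 1 := esym_zero μ
            norm_num at hgn'
            rw [h0] at hgn'
            linarith [hgn']
          have hid2E : ((m.choose 2 : ℕ) : ℝ) * 2 * (esym 1 μ * esym 1 μ)
              = ((m.choose 1 : ℕ) : ℝ) * ((m:ℝ)-1) * (esym 1 μ * esym 1 μ) := by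
            linear_combination (esym 1 μ * esym 1 μ) * hid2
          have hmul := mul_le_mul_of_nonneg_left hgn0
            (by positivity : (0:ℝ) ≤ ((m.choose 1 : ℕ) : ℝ))
          norm_num
          rw [hC1] at hmul hid2E
          linarith [hmul, hid2E]
        · -- inductive step : 1 ≤ j
          have hj1 : 1 ≤ j := by omega
          have ihj := ih hj1 (by omega)
          have hEj : 0 < esym j μ := hpos j hj1 (by omega)
          have hmj : (0:ℝ) < (m:ℝ) - (j:ℝ) := by
            have : (j:ℝ) + 2 ≤ (m:ℝ) := by exact_mod_cast hj2m
            linarith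
          have F1 : ((m.choose (j+1) : ℕ) : ℝ) * ((j:ℝ)+1)
              = ((m.choose j : ℕ) : ℝ) * ((m:ℝ) - (j:ℝ)) := by
            have h := Nat.choose_succ_right_eq m j
            have hc := congrArg (Nat.cast : ℕ → ℝ) h
            push_cast [Nat.cast_sub (by omega : j ≤ m)] at hc
            linarith [hc]
          have F2 : ((m.choose (j+2) : ℕ) : ℝ) * ((j:ℝ)+2)
              = ((m.choose (j+1) : ℕ) : ℝ) * ((m:ℝ) - (j:ℝ) - 1) := by
            have h := Nat.choose_succ_right_eq m (j+1)
            have hc := congrArg (Nat.cast : ℕ → ℝ) h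
            have : j + 1 + 1 = j + 2 := by omega
            rw [this] at hc
            push_cast [Nat.cast_sub (by omega : j + 1 ≤ m)] at hc
            linarith [hc]
          have hX : (0:ℝ) < ((j:ℝ)+1)*((j:ℝ)+2)*esym (j+1) μ := by positivity
          refine (mul_le_mul_iff_left₀ hX).mp ?_
          have step1 : (m:ℝ) * (m.choose (j+1) : ℝ) * esym (j+1+1) μ
                * (((j:ℝ)+1)*((j:ℝ)+2)*esym (j+1) μ)
              = ((m:ℝ) * (m.choose j : ℝ) * esym (j+1) μ)
                * (((j:ℝ)+2)*((m:ℝ)-(j:ℝ))*esym (j+2) μ) := by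
            have hj11 : j + 1 + 1 = j + 2 := by omega
            rw [hj11]
            linear_combination ((m:ℝ)*((j:ℝ)+2)*esym (j+2) μ*esym (j+1) μ) * F1
          have step2 : ((m:ℝ) * (m.choose j : ℝ) * esym (j+1) μ)
                * (((j:ℝ)+2)*((m:ℝ)-(j:ℝ))*esym (j+2) μ)
              ≤ ((m.choose (j+1) : ℝ) * esym 1 μ * esym j μ)
                * (((j:ℝ)+2)*((m:ℝ)-(j:ℝ))*esym (j+2) μ) := by
            apply mul_le_mul_of_nonneg_right ihj
            have h2 : (0:ℝ) ≤ (j:ℝ)+2 := by positivity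
            exact mul_nonneg (mul_nonneg h2 hmj.le) hgt.le
          have step3 : ((m.choose (j+1) : ℝ) * esym 1 μ * esym j μ)
                * (((j:ℝ)+2)*((m:ℝ)-(j:ℝ))*esym (j+2) μ)
              ≤ ((m.choose (j+1) : ℝ) * esym 1 μ)
                * (((j:ℝ)+1)*((m:ℝ)-(j:ℝ)-1)*esym (j+1) μ ^ 2) := by
            have hnn : (0:ℝ) ≤ (m.choose (j+1) : ℝ) * esym 1 μ := by
              exact mul_nonneg (by positivity) hE1.le
            calc ((m.choose (j+1) : ℝ) * esym 1 μ * esym j μ)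
                  * (((j:ℝ)+2)*((m:ℝ)-(j:ℝ))*esym (j+2) μ)
                = ((m.choose (j+1) : ℝ) * esym 1 μ)
                  * (((j:ℝ)+2)*((m:ℝ)-(j:ℝ))*esym j μ*esym (j+2) μ) := by ring
              _ ≤ ((m.choose (j+1) : ℝ) * esym 1 μ)
                  * (((j:ℝ)+1)*((m:ℝ)-(j:ℝ)-1)*esym (j+1) μ ^ 2) :=
                  mul_le_mul_of_nonneg_left hgn' hnn
          have step4 : ((m.choose (j+1) : ℝ) * esym 1 μ)
                * (((j:ℝ)+1)*((m:ℝ)-(j:ℝ)-1)*esym (j+1) μ ^ 2)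
              = ((m.choose (j+1+1) : ℝ) * esym 1 μ * esym (j+1) μ)
                * (((j:ℝ)+1)*((j:ℝ)+2)*esym (j+1) μ) := by
            have hj11 : j + 1 + 1 = j + 2 := by omega
            rw [hj11]
            linear_combination (-(((j:ℝ)+1) * esym 1 μ * esym (j+1) μ ^ 2)) * F2
          calc (m:ℝ) * (m.choose (j+1) : ℝ) * esym (j+1+1) μ
                * (((j:ℝ)+1)*((j:ℝ)+2)*esym (j+1) μ)
              = ((m:ℝ) * (m.choose j : ℝ) * esym (j+1) μ)
                * (((j:ℝ)+2)*((m:ℝ)-(j:ℝ))*esym (j+2) μ) := step1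
            _ ≤ _ := step2
            _ ≤ _ := step3
            _ = _ := step4
  -- conclude
  have hCk : (0:ℝ) < (m.choose k : ℝ) := by
    exact_mod_cast Nat.choose_pos (by omega : k ≤ m)
  have hid : ((m.choose (k+1) : ℕ) : ℝ) * ((k:ℝ)+1)
      = ((m.choose k : ℕ) : ℝ) * ((m:ℝ) - (k:ℝ)) := by
    have h := Nat.choose_succ_right_eq m k
    have hc := congrArg (Nat.cast : ℕ → ℝ) h
    push_cast [Nat.cast_sub (by omega : k ≤ m)] at hc
    linarith [hc]
  have hmain := main k hk le_rfl
  have h1 := mul_le_mul_of_nonneg_right hmain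
    (by positivity : (0:ℝ) ≤ (k:ℝ)+1)
  refine (mul_le_mul_iff_right₀ hCk).mp ?_
  have h2 : ((m.choose (k+1) : ℕ) : ℝ) * esym 1 μ * esym k μ * ((k:ℝ)+1)
      = (m.choose k : ℝ) * (((m:ℝ)-(k:ℝ)) * esym 1 μ * esym k μ) := by
    linear_combination (esym 1 μ * esym k μ) * hid
  calc (m.choose k : ℝ) * ((m:ℝ) * ((k:ℝ)+1) * esym (k+1) μ)
      = (m:ℝ) * (m.choose k : ℝ) * esym (k+1) μ * ((k:ℝ)+1) := by ring
    _ ≤ (m.choose (k+1) : ℝ) * esym 1 μ * esym k μ * ((k:ℝ)+1) := h1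
    _ = (m.choose k : ℝ) * (((m:ℝ)-(k:ℝ)) * esym 1 μ * esym k μ) := h2

/-- For λ in the closed cone Γ̄_k^+,
((n+1−k)/(n+1))·σ_k(λ)·σ_1(λ) − (k+1)·σ_{k+1}(λ) ≥ 0. -/
theorem newton_ineq_closed_cone (n k : ℕ) (hk : 1 ≤ k) (hkn : k ≤ n)
    (lam : Fin (n+1) → ℝ)
    (hcone : ∀ j, 1 ≤ j → j ≤ k → 0 ≤ esym j lam) :
    0 ≤ (((n : ℝ) + 1 - k) / ((n : ℝ) + 1)) * esym k lam * esym 1 lam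
        - ((k : ℝ) + 1) * esym (k+1) lam := by
  have hopen : ∀ ε : ℝ, 0 < ε → ∀ j, 1 ≤ j → j ≤ k →
      0 < esym j (fun i => lam i + ε) := by
    intro ε hε j hj1 hjk
    rw [esym_shift j (by omega) lam ε]
    apply Finset.sum_pos'
    · intro i hi
      rw [Finset.mem_range] at hi
      rcases Nat.eq_zero_or_pos i with h0 | h1
      · subst h0
        rw [esym_zero]
        positivity
      · apply mul_nonneg (mul_nonneg (by positivity) (by positivity))
          (hcone i h1 (by omega))
    · refine ⟨0, Finset.mem_range.mpr (by omega), ?_⟩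
      rw [esym_zero, Nat.sub_zero, Nat.sub_zero, mul_one]
      have hc : 0 < ((n + 1).choose j : ℝ) := by
        exact_mod_cast Nat.choose_pos (by omega : j ≤ n + 1)
      positivity
  set G : ℝ → ℝ := fun ε =>
    (((n : ℝ) + 1 - k) / ((n : ℝ) + 1)) * esym k (fun i => lam i + ε)
        * esym 1 (fun i => lam i + ε)
      - ((k : ℝ) + 1) * esym (k+1) (fun i => lam i + ε) with hG
  have hshift : ∀ ε ∈ Set.Ioi (0:ℝ), 0 ≤ G ε := by
    intro ε hε
    rw [Set.mem_Ioi] at hε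
    have hch := chain (n+1) k hk (by omega) (fun i => lam i + ε) (hopen ε hε)
    rw [hG]
    have hm : (0:ℝ) < (n:ℝ) + 1 := by positivity
    have hcast : ((n+1 : ℕ):ℝ) = (n:ℝ) + 1 := by push_cast; ring
    rw [hcast] at hch
    simp only []
    rw [sub_nonneg, div_mul_eq_mul_div, div_mul_eq_mul_div, le_div_iff₀ hm]
    nlinarith [hch]
  have hcontesym : ∀ j : ℕ, Continuous (fun ε : ℝ => esym j (fun i => lam i + ε)) := by
    intro j
    unfold esym
    apply continuous_finset_sum
    intro s _
    apply continuous_finset_prod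
    intro i _
    exact continuous_const.add continuous_id
  have hcont : Continuous G := by
    rw [hG]
    exact ((continuous_const.mul (hcontesym k)).mul (hcontesym 1)).sub
      (continuous_const.mul (hcontesym (k+1)))
  have hlim : Tendsto G (𝓝[>] (0:ℝ)) (𝓝 (G 0)) :=
    (hcont.tendsto 0).mono_left nhdsWithin_le_nhds
  have hfinal : 0 ≤ G 0 :=
    ge_of_tendsto hlim (eventually_nhdsWithin_of_forall hshift)
  have hfun : (fun i : Fin (n+1) => lam i + (0:ℝ)) = lam := by
    funext i; ring
  rw [hG] at hfinal
  simp only [hfun] at hfinal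
  exact hfinal
end

section
/- Let a > 0 > c and |y| > 1 with φ(x) = a|x−y|² + c positive on the closed unit ball, and let φ_y(z) = y + (|y|²−1)(z−y)/|z−y|². Then the pullback under φ_y of the metric (a|x−y|²+c)^{−2}|dx|² equals (a'|z−y|² + c')^{−2}|dz|², where a' = c/(|y|²−1) < 0 and c' = a(|y|²−1) > 0; moreover a'c' = ac and a'(|y|²−1) + c' = a(|y|²−1) + c. -/
/-- Pullback of the metric (a|x−y|²+c)^{−2}|dx|² under the inversion φ_y is
(a'|z−y|²+c')^{−2}|dz|² with a' = c/(|y|²−1), c' = a(|y|²−1); moreover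
a'c' = ac and a'(|y|²−1)+c' = a(|y|²−1)+c. The pullback identity is expressed
via the conformal factor μ(z) = (|y|²−1)/|z−y|²:
u(φ_y z) = μ(z)·(a'|z−y|²+c'). -/
theorem pullback_metric_inversion (n : ℕ) (a c : ℝ) (ha : 0 < a) (hc : c < 0)
    (y : EuclideanSpace ℝ (Fin (n+1))) (hy : 1 < ‖y‖)
    (hpos : ∀ x : EuclideanSpace ℝ (Fin (n+1)), ‖x‖ ≤ 1 → 0 < a * ‖x - y‖ ^ 2 + c) :
    let φ : EuclideanSpace ℝ (Fin (n+1)) → EuclideanSpace ℝ (Fin (n+1)) :=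
      fun z => y + ((‖y‖ ^ 2 - 1) / ‖z - y‖ ^ 2) • (z - y)
    let a' : ℝ := c / (‖y‖ ^ 2 - 1)
    let c' : ℝ := a * (‖y‖ ^ 2 - 1)
    a' < 0 ∧ 0 < c' ∧ a' * c' = a * c ∧
    a' * (‖y‖ ^ 2 - 1) + c' = a * (‖y‖ ^ 2 - 1) + c ∧
    (∀ z : EuclideanSpace ℝ (Fin (n+1)), z ≠ y →
      a * ‖φ z - y‖ ^ 2 + c
        = ((‖y‖ ^ 2 - 1) / ‖z - y‖ ^ 2) * (a' * ‖z - y‖ ^ 2 + c')) := by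
  intro φ a' c'
  have hY : 0 < ‖y‖ ^ 2 - 1 := by nlinarith [norm_nonneg y]
  refine ⟨div_neg_of_neg_of_pos hc hY, mul_pos ha hY, ?_, ?_, ?_⟩
  · simp only [a', c']; field_simp
  · simp only [a', c']; field_simp; ring
  · intro z hz
    have hr : (0:ℝ) < ‖z - y‖ := by
      simpa [sub_eq_zero] using norm_pos_iff.2 (sub_ne_zero.2 hz)
    have hφ : φ z - y = ((‖y‖ ^ 2 - 1) / ‖z - y‖ ^ 2) • (z - y) := by
      simp [φ, add_sub_cancel_left]
    have hnorm : ‖φ z - y‖ = ((‖y‖ ^ 2 - 1) / ‖z - y‖ ^ 2) * ‖z - y‖ := by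
      rw [hφ, norm_smul, Real.norm_eq_abs, abs_of_pos
        (div_pos hY (by positivity))]
    rw [hnorm]
    have hr2 : ‖z - y‖ ^ 2 ≠ 0 := by positivity
    simp only [a', c']
    field_simp
    ring
end
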